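/- arXiv:1807.03483 — 8 statements merged into one kernel-verified Lean document; each statement's English description precedes it below -/
import Mathlib

section
/- Let N ≥ 1, let φ : ℝ^N → ℝ, and let v⁻, v⁰, v⁺ ∈ ℝ^N. Suppose u₊, u₋ ∈ ℝ^N satisfy the entropy-conservation conditions ⟨v⁺ − v⁰, u₊⟩ = φ(v⁺) − φ(v⁰) and ⟨v⁰ − v⁻, u₋⟩ = φ(v⁰) − φ(v⁻). Define the numerical entropy fluxes Û₊ = ½⟨v⁰ + v⁺, u₊⟩ − ½(φ(v⁰) + φ(v⁺)) and Û₋ = ½⟨v⁻ + v⁰, u₋⟩ − ½(φ(v⁻) + φ(v⁰)). Then ⟨v⁰, u₊ − u₋⟩ = Û₊ − Û₋. -/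
open RealInnerProductSpace

/-- If the temporal fluxes `u₊, u₋` are entropy conservative with respect to the
potential `φ` across the `n+1/2` and `n-1/2` interfaces, then the scheme satisfies
a discrete entropy conservation identity with consistent numerical entropy fluxes. -/
theorem temporal_entropy_conservation (N : ℕ) (hN : 1 ≤ N)
    (φ : EuclideanSpace ℝ (Fin N) → ℝ)
    (vm v0 vp : EuclideanSpace ℝ (Fin N))
    (up um : EuclideanSpace ℝ (Fin N))
    (hup : ⟪vp - v0, up⟫ = φ vp - φ v0)
    (hum : ⟪v0 - vm, um⟫ = φ v0 - φ vm) :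
    ⟪v0, up - um⟫ =
      ((1 / 2 : ℝ) * ⟪v0 + vp, up⟫ - (1 / 2 : ℝ) * (φ v0 + φ vp)) -
      ((1 / 2 : ℝ) * ⟪vm + v0, um⟫ - (1 / 2 : ℝ) * (φ vm + φ v0)) := by
  simp only [inner_sub_right, inner_sub_left, inner_add_left] at *
  linarith
end

section
/- Let N ≥ 1, let φ, ψ : ℝ^N → ℝ, let λ ∈ ℝ, and let v_j^{n−1}, v_j^n, v_j^{n+1}, v_{j−1}^n, v_{j+1}^n ∈ ℝ^N be entropy-variable values on a space-time stencil. Suppose the temporal fluxes u₊, u₋ ∈ ℝ^N satisfy ⟨v_j^{n+1} − v_j^n, u₊⟩ = φ(v_j^{n+1}) − φ(v_j^n) and ⟨v_j^n − v_j^{n−1}, u₋⟩ = φ(v_j^n) − φ(v_j^{n−1}), and the spatial fluxes f₊, f₋ ∈ ℝ^N satisfy ⟨v_{j+1}^n − v_j^n, f₊⟩ = ψ(v_{j+1}^n) − ψ(v_j^n) and ⟨v_j^n − v_{j−1}^n, f₋⟩ = ψ(v_j^n) − ψ(v_{j−1}^n). If the space-time finite-volume update (u₊ − u₋) + λ(f₊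 − f₋) = 0 holds, then, defining the numerical entropy fluxes Û₊ = ½⟨v_j^n + v_j^{n+1}, u₊⟩ − ½(φ(v_j^n) + φ(v_j^{n+1})), Û₋ = ½⟨v_j^{n−1} + v_j^n, u₋⟩ − ½(φ(v_j^{n−1}) + φ(v_j^n)), F̂₊ = ½⟨v_j^n + v_{j+1}^n, f₊⟩ − ½(ψ(v_j^n) + ψ(v_{j+1}^n)), and F̂₋ = ½⟨v_{j−1}^n + v_j^n, f₋⟩ − ½(ψ(v_{j−1}^n) + ψ(v_j^n)), one has the discrete entropy conservation identity (Û₊ − Û₋) + λ(F̂₊ − F̂₋) = 0. -/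
open RealInnerProductSpace

/-- A space-time finite-volume scheme with entropy conservative temporal fluxes
(with respect to the temporal potential `φ`) and entropy conservative spatial
fluxes (with respect to the spatial potential `ψ`) satisfies a discrete entropy
conservation identity. -/
theorem space_time_entropy_conservation (N : ℕ) (hN : 1 ≤ N)
    (φ ψ : EuclideanSpace ℝ (Fin N) → ℝ) (lam : ℝ)
    (vjnm vjn vjnp vjm vjp : EuclideanSpace ℝ (Fin N))
    (up um fp fm : EuclideanSpace ℝ (Fin N))
    (hup : ⟪vjnp - vjn, up⟫ = φ vjnp - φ vjn)
    (hum : ⟪vjn - vjnm, um⟫ = φ vjn - φ vjnm)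
    (hfp : ⟪vjp - vjn, fp⟫ = ψ vjp - ψ vjn)
    (hfm : ⟪vjn - vjm, fm⟫ = ψ vjn - ψ vjm)
    (hscheme : (up - um) + lam • (fp - fm) = 0) :
    (((1 / 2 : ℝ) * ⟪vjn + vjnp, up⟫ - (1 / 2 : ℝ) * (φ vjn + φ vjnp)) -
     ((1 / 2 : ℝ) * ⟪vjnm + vjn, um⟫ - (1 / 2 : ℝ) * (φ vjnm + φ vjn))) +
    lam * (((1 / 2 : ℝ) * ⟪vjn + vjp, fp⟫ - (1 / 2 : ℝ) * (ψ vjn + ψ vjp)) -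
           ((1 / 2 : ℝ) * ⟪vjm + vjn, fm⟫ - (1 / 2 : ℝ) * (ψ vjm + ψ vjn))) = 0 := by
  have h0 : ⟪vjn, (up - um) + lam • (fp - fm)⟫ = 0 := by rw [hscheme, inner_zero_right]
  simp only [inner_add_right, inner_sub_right, inner_smul_right] at h0
  simp only [inner_sub_left, inner_add_left] at *
  linear_combination h0 + (1/2) * hup + (1/2) * hum + (lam/2) * hfp + (lam/2) * hfm
end

section
/- Let N ≥ 1, let φ : ℝ^N → ℝ, and let v⁻, v⁰, v⁺ ∈ ℝ^N. Suppose u*₊, u*₋ ∈ ℝ^N satisfy ⟨v⁺ − v⁰, u*₊⟩ = φ(v⁺) − φ(v⁰) and ⟨v⁰ − v⁻, u*₋⟩ = φ(v⁰) − φ(v⁻), and let T₊, T₋ : ℝ^N → ℝ^N be continuous linear maps. Define the entropy-stable temporal fluxes u₊ = u*₊ − T₊(v⁺ − v⁰) and u₋ = u*₋ − T₋(v⁰ − v⁻), and the modified numerical entropy fluxes Û'₊ = ½⟨v⁰ + v⁺, u*₊⟩ − ½(φ(v⁰) + φ(v⁺)) − ½⟨v⁰ + v⁺, T₊(v⁺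 − v⁰)⟩ and Û'₋ = ½⟨v⁻ + v⁰, u*₋⟩ − ½(φ(v⁻) + φ(v⁰)) − ½⟨v⁻ + v⁰, T₋(v⁰ − v⁻)⟩. Then ⟨v⁰, u₊ − u₋⟩ = Û'₊ − Û'₋ + ½⟨v⁺ − v⁰, T₊(v⁺ − v⁰)⟩ + ½⟨v⁰ − v⁻, T₋(v⁰ − v⁻)⟩; in particular, if T₊ and T₋ are positive semidefinite (⟨x, T x⟩ ≥ 0 for all x), then ⟨v⁰, u₊ − u₋⟩ ≥ Û'₊ − Û'₋. -/
open RealInnerProductSpace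

/-- Adding a dissipation term `T Δv` with `T` positive semidefinite to an entropy
conservative temporal flux yields an entropy stable temporal flux: the entropy
balance acquires nonnegative production terms `½ Δvᵀ T Δv`. -/
theorem temporal_entropy_stability (N : ℕ) (hN : 1 ≤ N)
    (φ : EuclideanSpace ℝ (Fin N) → ℝ)
    (vm v0 vp : EuclideanSpace ℝ (Fin N))
    (ustarp ustarm : EuclideanSpace ℝ (Fin N))
    (Tp Tm : EuclideanSpace ℝ (Fin N) →L[ℝ] EuclideanSpace ℝ (Fin N))
    (hup : ⟪vp - v0, ustarp⟫ = φ vp - φ v0)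
    (hum : ⟪v0 - vm, ustarm⟫ = φ v0 - φ vm) :
    (⟪v0, (ustarp - Tp (vp - v0)) - (ustarm - Tm (v0 - vm))⟫ =
      (((1 / 2 : ℝ) * ⟪v0 + vp, ustarp⟫ - (1 / 2 : ℝ) * (φ v0 + φ vp)
          - (1 / 2 : ℝ) * ⟪v0 + vp, Tp (vp - v0)⟫) -
       ((1 / 2 : ℝ) * ⟪vm + v0, ustarm⟫ - (1 / 2 : ℝ) * (φ vm + φ v0)
          - (1 / 2 : ℝ) * ⟪vm + v0, Tm (v0 - vm)⟫))
      + (1 / 2 : ℝ) * ⟪vp - v0, Tp (vp - v0)⟫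
      + (1 / 2 : ℝ) * ⟪v0 - vm, Tm (v0 - vm)⟫)
    ∧ ((∀ x, 0 ≤ ⟪x, Tp x⟫) → (∀ x, 0 ≤ ⟪x, Tm x⟫) →
        ⟪v0, (ustarp - Tp (vp - v0)) - (ustarm - Tm (v0 - vm))⟫ ≥
          (((1 / 2 : ℝ) * ⟪v0 + vp, ustarp⟫ - (1 / 2 : ℝ) * (φ v0 + φ vp)
              - (1 / 2 : ℝ) * ⟪v0 + vp, Tp (vp - v0)⟫) -
           ((1 / 2 : ℝ) * ⟪vm + v0, ustarm⟫ - (1 / 2 : ℝ) * (φ vm + φ v0)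
              - (1 / 2 : ℝ) * ⟪vm + v0, Tm (v0 - vm)⟫))) := by
  have key : (⟪v0, (ustarp - Tp (vp - v0)) - (ustarm - Tm (v0 - vm))⟫ =
      (((1 / 2 : ℝ) * ⟪v0 + vp, ustarp⟫ - (1 / 2 : ℝ) * (φ v0 + φ vp)
          - (1 / 2 : ℝ) * ⟪v0 + vp, Tp (vp - v0)⟫) -
       ((1 / 2 : ℝ) * ⟪vm + v0, ustarm⟫ - (1 / 2 : ℝ) * (φ vm + φ v0)
          - (1 / 2 : ℝ) * ⟪vm + v0, Tm (v0 - vm)⟫))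
      + (1 / 2 : ℝ) * ⟪vp - v0, Tp (vp - v0)⟫
      + (1 / 2 : ℝ) * ⟪v0 - vm, Tm (v0 - vm)⟫) := by
    simp only [inner_sub_left, inner_add_left, inner_sub_right] at *
    linarith
  refine ⟨key, fun hp hm => ?_⟩
  rw [key]
  have h1 := hp (vp - v0)
  have h2 := hm (v0 - vm)
  linarith
end

section
/- Let γ > 1 and let (ρ_L, u_L, p_L) and (ρ_R, u_R, p_R) be two states with ρ_L, ρ_R, p_L, p_R > 0. Define for each state z₁ = √(ρ/p), z₂ = u√(ρ/p), z₃ = √(ρp) and the entropy variables v = (v₁, v₂, v₃) = ((γ − S)/(γ−1) − ρu²/(2p), ρu/p, −ρ/p) with S = log p − γ log ρ. Write [a] = a_R − a_L and ā = (a_L + a_R)/2. Then: (a) [v₂] = z̄₁[z₂] + z̄₂[z₁]; (b) [v₃] = −2 z̄₁ [z₁]; and (c) if moreover z₁_L ≠ z₁_R and z₃_L ≠ z₃_R, then [v₁] = [z₃]/z₃^{ln} − ((1+γ)/(1−γ)) [z₁]/z₁^{ln} − z̄₂[z₂], where a^{ln} = (a_R − a_L)/(log a_R − log a_L) is the logarithmic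 mean. -/
/-- Jump identities expressing the jumps of the Euler entropy variables in terms of
jumps and means of the Roe algebraic variables `z₁ = √(ρ/p)`, `z₂ = u√(ρ/p)`,
`z₃ = √(ρp)`: (a) `[v₂] = z̄₁[z₂] + z̄₂[z₁]`, (b) `[v₃] = −2 z̄₁[z₁]`, and
(c) `[v₁] = [z₃]/z₃ˡⁿ − ((1+γ)/(1−γ))[z₁]/z₁ˡⁿ − z̄₂[z₂]` when the jumps are nonzero. -/
theorem entropy_variable_jump_identities (γ ρL uL pL ρR uR pR : ℝ)
    (hγ : 1 < γ) (hρL : 0 < ρL) (hpL : 0 < pL) (hρR : 0 < ρR) (hpR : 0 < pR) :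
    let SL : ℝ := Real.log pL - γ * Real.log ρL
    let SR : ℝ := Real.log pR - γ * Real.log ρR
    let v1L : ℝ := (γ - SL) / (γ - 1) - ρL * uL ^ 2 / (2 * pL)
    let v2L : ℝ := ρL * uL / pL
    let v3L : ℝ := -(ρL / pL)
    let v1R : ℝ := (γ - SR) / (γ - 1) - ρR * uR ^ 2 / (2 * pR)
    let v2R : ℝ := ρR * uR / pR
    let v3R : ℝ := -(ρR / pR)
    let z1L : ℝ := Real.sqrt (ρL / pL)
    let z2L : ℝ := uL * Real.sqrt (ρL / pL)
    let z3L : ℝ := Real.sqrt (ρL * pL)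
    let z1R : ℝ := Real.sqrt (ρR / pR)
    let z2R : ℝ := uR * Real.sqrt (ρR / pR)
    let z3R : ℝ := Real.sqrt (ρR * pR)
    let z1bar : ℝ := (z1L + z1R) / 2
    let z2bar : ℝ := (z2L + z2R) / 2
    let z1ln : ℝ := (z1R - z1L) / (Real.log z1R - Real.log z1L)
    let z3ln : ℝ := (z3R - z3L) / (Real.log z3R - Real.log z3L)
    (v2R - v2L = z1bar * (z2R - z2L) + z2bar * (z1R - z1L)) ∧
    (v3R - v3L = -2 * z1bar * (z1R - z1L)) ∧
    (z1L ≠ z1R → z3L ≠ z3R →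
      v1R - v1L = (z3R - z3L) / z3ln
        - ((1 + γ) / (1 - γ)) * (z1R - z1L) / z1ln
        - z2bar * (z2R - z2L)) := by
  intro SL SR v1L v2L v3L v1R v2R v3R z1L z2L z3L z1R z2R z3R z1bar z2bar z1ln z3ln
  have haL : z1L ^ 2 = ρL / pL := Real.sq_sqrt (by positivity)
  have haR : z1R ^ 2 = ρR / pR := Real.sq_sqrt (by positivity)
  have hz1Lpos : 0 < z1L := Real.sqrt_pos.mpr (by positivity)
  have hz1Rpos : 0 < z1R := Real.sqrt_pos.mpr (by positivity)
  have hz3Lpos : 0 < z3L := Real.sqrt_pos.mpr (by positivity)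
  have hz3Rpos : 0 < z3R := Real.sqrt_pos.mpr (by positivity)
  have hvl : ρL * uL / pL = z2L * z1L := by
    show ρL * uL / pL = (uL * z1L) * z1L
    rw [mul_assoc, ← pow_two, haL]; field_simp
  have hvr : ρR * uR / pR = z2R * z1R := by
    show ρR * uR / pR = (uR * z1R) * z1R
    rw [mul_assoc, ← pow_two, haR]; field_simp
  refine ⟨?_, ?_, ?_⟩
  · show ρR * uR / pR - ρL * uL / pL = _
    rw [hvl, hvr]
    show _ = (z1L + z1R)/2 * (z2R - z2L) + (z2L + z2R)/2 * (z1R - z1L)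
    ring
  · show -(ρR / pR) - -(ρL / pL) = _
    rw [← haL, ← haR]
    show _ = -2 * ((z1L + z1R)/2) * (z1R - z1L)
    ring
  · intro h1 h3
    have hlog1 : Real.log z1R - Real.log z1L ≠ 0 := by
      intro h
      exact h1 (by
        have : Real.log z1L = Real.log z1R := by linarith
        calc z1L = Real.exp (Real.log z1L) := (Real.exp_log hz1Lpos).symm
        _ = Real.exp (Real.log z1R) := by rw [this]
        _ = z1R := Real.exp_log hz1Rpos)
    have hlog3 : Real.log z3R - Real.log z3L ≠ 0 := by
      intro h
      exact h3 (by
        have : Real.log z3L = Real.log z3R := by linarith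
        calc z3L = Real.exp (Real.log z3L) := (Real.exp_log hz3Lpos).symm
        _ = Real.exp (Real.log z3R) := by rw [this]
        _ = z3R := Real.exp_log hz3Rpos)
    have h1ne : z1R - z1L ≠ 0 := sub_ne_zero.mpr (Ne.symm h1)
    have h3ne : z3R - z3L ≠ 0 := sub_ne_zero.mpr (Ne.symm h3)
    have e1 : (z1R - z1L) / z1ln = Real.log z1R - Real.log z1L := by
      show (z1R - z1L) / ((z1R - z1L) / (Real.log z1R - Real.log z1L)) = _
      rw [div_div_eq_mul_div, mul_comm, mul_div_assoc, div_self h1ne, mul_one]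
    have e3 : (z3R - z3L) / z3ln = Real.log z3R - Real.log z3L := by
      show (z3R - z3L) / ((z3R - z3L) / (Real.log z3R - Real.log z3L)) = _
      rw [div_div_eq_mul_div, mul_comm, mul_div_assoc, div_self h3ne, mul_one]
    have l1L : Real.log z1L = (Real.log ρL - Real.log pL) / 2 := by
      show Real.log (Real.sqrt (ρL / pL)) = _
      rw [Real.log_sqrt (by positivity), Real.log_div hρL.ne' hpL.ne']
    have l1R : Real.log z1R = (Real.log ρR - Real.log pR) / 2 := by
      show Real.log (Real.sqrt (ρR / pR)) = _
      rw [Real.log_sqrt (by positivity), Real.log_div hρR.ne' hpR.ne']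
    have l3L : Real.log z3L = (Real.log ρL + Real.log pL) / 2 := by
      show Real.log (Real.sqrt (ρL * pL)) = _
      rw [Real.log_sqrt (by positivity), Real.log_mul hρL.ne' hpL.ne']
    have l3R : Real.log z3R = (Real.log ρR + Real.log pR) / 2 := by
      show Real.log (Real.sqrt (ρR * pR)) = _
      rw [Real.log_sqrt (by positivity), Real.log_mul hρR.ne' hpR.ne']
    have hz2 : z2bar * (z2R - z2L) = ρR * uR ^ 2 / (2 * pR) - ρL * uL ^ 2 / (2 * pL) := by
      show (uL * z1L + uR * z1R) / 2 * (uR * z1R - uL * z1L) = _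
      have : (uL * z1L + uR * z1R) / 2 * (uR * z1R - uL * z1L)
          = (uR ^ 2 * z1R ^ 2 - uL ^ 2 * z1L ^ 2) / 2 := by ring
      rw [this, haL, haR]
      field_simp
    rw [e3, mul_div_assoc, e1, hz2, l1L, l1R, l3L, l3R]
    show (γ - (Real.log pR - γ * Real.log ρR)) / (γ - 1) - ρR * uR ^ 2 / (2 * pR)
      - ((γ - (Real.log pL - γ * Real.log ρL)) / (γ - 1) - ρL * uL ^ 2 / (2 * pL)) = _
    have hγ1 : γ - 1 ≠ 0 := by linarith
    have hγ2 : (1:ℝ) - γ ≠ 0 := by linarith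
    field_simp
    ring
end

section
/- Let γ > 1 and let (ρ_L, u_L, p_L) and (ρ_R, u_R, p_R) be two states with ρ_L, ρ_R, p_L, p_R > 0. Define for each state z₁ = √(ρ/p), z₂ = u√(ρ/p), z₃ = √(ρp) and the entropy variables v = ((γ − S)/(γ−1) − ρu²/(2p), ρu/p, −ρ/p) with S = log p − γ log ρ. Assume z₁_L ≠ z₁_R and z₃_L ≠ z₃_R, and define the Roe-type entropy conservative temporal flux u* = (u₁, u₂, u₃) by u₁ = z̄₁ z₃^{ln}, u₂ = u₁ z̄₂/z̄₁, and u₃ = (1/(2z̄₁)) (−u₁ ((1+γ)/(1−γ)) / z₁^{ln} + u₂ z̄₂ − z̄₃). Then ⟨v_R − v_L, u*⟩ = ρ_R − ρ_L, i.e., u* satisfies the entropy conservation condition [v]·u* = [φ] with temporal flux potential φ = ρ. -/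
open Matrix

set_option maxHeartbeats 1600000

open Matrix


lemma roe_aux (γ z1L z2L z3L z1R z2R z3R l1L l1R l3L l3R SL SR r : ℝ)
    (hγ : γ - 1 ≠ 0)
    (hl1 : l1R - l1L ≠ 0) (hl3 : l3R - l3L ≠ 0)
    (hz : z1R - z1L ≠ 0) (hbar : z1L + z1R ≠ 0)
    (hSL : SL = (1 - γ) * l3L - (1 + γ) * l1L)
    (hSR : SR = (1 - γ) * l3R - (1 + γ) * l1R)
    (hr : r = z1R * z3R - z1L * z3L) :
    ((γ - SR) / (γ - 1) - z2R ^ 2 / 2 - ((γ - SL) / (γ - 1) - z2L ^ 2 / 2)) *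
        (((z1L + z1R) / 2) * ((z3R - z3L) / (l3R - l3L)))
      + (z1R * z2R - z1L * z2L) *
        ((((z1L + z1R) / 2) * ((z3R - z3L) / (l3R - l3L))) * ((z2L + z2R) / 2) /
          ((z1L + z1R) / 2))
      + (-(z1R ^ 2) - -(z1L ^ 2)) *
        ((1 / (2 * ((z1L + z1R) / 2))) *
          (-((((z1L + z1R) / 2) * ((z3R - z3L) / (l3R - l3L)))) * ((1 + γ) / (1 - γ)) /
              ((z1R - z1L) / (l1R - l1L))
            + (((z1L + z1R) / 2) * ((z3R - z3L) / (l3R - l3L))) * ((z2L + z2R) / 2) /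
                ((z1L + z1R) / 2) * ((z2L + z2R) / 2)
            - (z3L + z3R) / 2)) = r := by
  subst hSL hSR hr
  have h1γ : (1 : ℝ) - γ ≠ 0 := fun h => hγ (by linarith)
  field_simp
  ring


/-- The Roe-type entropy conservative temporal flux `u* = (u₁, u₂, u₃)` for the 1D
Euler equations satisfies the entropy conservation condition `[v]·u* = [φ]` with
temporal flux potential `φ = ρ`. -/
theorem roe_temporal_flux_is_entropy_conservative (γ ρL uL pL ρR uR pR : ℝ)
    (hγ : 1 < γ) (hρL : 0 < ρL) (hpL : 0 < pL) (hρR : 0 < ρR) (hpR : 0 < pR) :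
    let SL : ℝ := Real.log pL - γ * Real.log ρL
    let SR : ℝ := Real.log pR - γ * Real.log ρR
    let vL : Fin 3 → ℝ :=
      ![(γ - SL) / (γ - 1) - ρL * uL ^ 2 / (2 * pL), ρL * uL / pL, -(ρL / pL)]
    let vR : Fin 3 → ℝ :=
      ![(γ - SR) / (γ - 1) - ρR * uR ^ 2 / (2 * pR), ρR * uR / pR, -(ρR / pR)]
    let z1L : ℝ := Real.sqrt (ρL / pL)
    let z2L : ℝ := uL * Real.sqrt (ρL / pL)
    let z3L : ℝ := Real.sqrt (ρL * pL)
    let z1R : ℝ := Real.sqrt (ρR / pR)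
    let z2R : ℝ := uR * Real.sqrt (ρR / pR)
    let z3R : ℝ := Real.sqrt (ρR * pR)
    let z1bar : ℝ := (z1L + z1R) / 2
    let z2bar : ℝ := (z2L + z2R) / 2
    let z3bar : ℝ := (z3L + z3R) / 2
    let z1ln : ℝ := (z1R - z1L) / (Real.log z1R - Real.log z1L)
    let z3ln : ℝ := (z3R - z3L) / (Real.log z3R - Real.log z3L)
    let u1 : ℝ := z1bar * z3ln
    let u2 : ℝ := u1 * z2bar / z1bar
    let u3 : ℝ := (1 / (2 * z1bar)) *
      (-u1 * ((1 + γ) / (1 - γ)) / z1ln + u2 * z2bar - z3bar)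
    z1L ≠ z1R → z3L ≠ z3R →
      (vR - vL) ⬝ᵥ ![u1, u2, u3] = ρR - ρL := by
  obtain ⟨a, ha, rfl⟩ : ∃ a, 0 < a ∧ ρL = a ^ 2 :=
    ⟨Real.sqrt ρL, Real.sqrt_pos.2 hρL, (Real.sq_sqrt hρL.le).symm⟩
  obtain ⟨b, hb, rfl⟩ : ∃ b, 0 < b ∧ pL = b ^ 2 :=
    ⟨Real.sqrt pL, Real.sqrt_pos.2 hpL, (Real.sq_sqrt hpL.le).symm⟩
  obtain ⟨c, hc, rfl⟩ : ∃ c, 0 < c ∧ ρR = c ^ 2 :=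
    ⟨Real.sqrt ρR, Real.sqrt_pos.2 hρR, (Real.sq_sqrt hρR.le).symm⟩
  obtain ⟨d, hd, rfl⟩ : ∃ d, 0 < d ∧ pR = d ^ 2 :=
    ⟨Real.sqrt pR, Real.sqrt_pos.2 hpR, (Real.sq_sqrt hpR.le).symm⟩
  have hs1 : Real.sqrt (a ^ 2 / b ^ 2) = a / b := by
    rw [← div_pow, Real.sqrt_sq (by positivity)]
  have hs2 : Real.sqrt (a ^ 2 * b ^ 2) = a * b := by
    rw [← mul_pow, Real.sqrt_sq (by positivity)]
  have hs3 : Real.sqrt (c ^ 2 / d ^ 2) = c / d := by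
    rw [← div_pow, Real.sqrt_sq (by positivity)]
  have hs4 : Real.sqrt (c ^ 2 * d ^ 2) = c * d := by
    rw [← mul_pow, Real.sqrt_sq (by positivity)]
  dsimp only
  rw [hs1, hs2, hs3, hs4]
  intro h1 h3
  -- logs
  have la : Real.log (a ^ 2) = 2 * Real.log a := by
    rw [Real.log_pow]; push_cast; ring
  have lb : Real.log (b ^ 2) = 2 * Real.log b := by
    rw [Real.log_pow]; push_cast; ring
  have lc : Real.log (c ^ 2) = 2 * Real.log c := by
    rw [Real.log_pow]; push_cast; ring
  have ld : Real.log (d ^ 2) = 2 * Real.log d := by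
    rw [Real.log_pow]; push_cast; ring
  have ldiv1 : Real.log (a / b) = Real.log a - Real.log b := Real.log_div ha.ne' hb.ne'
  have ldiv2 : Real.log (c / d) = Real.log c - Real.log d := Real.log_div hc.ne' hd.ne'
  have lmul1 : Real.log (a * b) = Real.log a + Real.log b := Real.log_mul ha.ne' hb.ne'
  have lmul2 : Real.log (c * d) = Real.log c + Real.log d := Real.log_mul hc.ne' hd.ne'
  -- nonzero log differences
  have hL1 : Real.log (c / d) - Real.log (a / b) ≠ 0 := by
    intro h
    exact h1 (Real.log_injOn_pos (Set.mem_Ioi.2 (by positivity))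
      (Set.mem_Ioi.2 (by positivity)) (by linarith))
  have hL3 : Real.log (c * d) - Real.log (a * b) ≠ 0 := by
    intro h
    exact h3 (Real.log_injOn_pos (Set.mem_Ioi.2 (by positivity))
      (Set.mem_Ioi.2 (by positivity)) (by linarith))
  have hd1 : c / d - a / b ≠ 0 := sub_ne_zero.2 (Ne.symm h1)
  have hbar : (a / b + c / d) / 2 ≠ 0 := by positivity
  have hγ1 : γ - 1 ≠ 0 := by linarith
  have hγ2 : (1 : ℝ) - γ ≠ 0 := by linarith
  rw [ldiv1, ldiv2] at hL1
  rw [lmul1, lmul2] at hL3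
  show _ = _
  simp only [dotProduct, Fin.sum_univ_three, Pi.sub_apply,
    Matrix.cons_val_zero, Matrix.cons_val_one, Matrix.head_cons,
    Matrix.cons_val_two, Matrix.tail_cons]
  rw [la, lb, lc, ld, ldiv1, ldiv2, lmul1, lmul2]
  set La := Real.log a with hLa
  set Lb := Real.log b with hLb
  set Lc := Real.log c with hLc
  set Ld := Real.log d with hLd
  have hp : Lc - Ld - (La - Lb) ≠ 0 := by intro h; apply hL1; linarith
  have hq : Lc + Ld - (La + Lb) ≠ 0 := by intro h; apply hL3; linarith
  have hz' : c / d - a / b ≠ 0 := hd1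
  have hbar2 : a / b + c / d ≠ 0 := fun h => hbar (by rw [h]; ring)
  have hrr : (c : ℝ) ^ 2 - a ^ 2 = (c / d) * (c * d) - (a / b) * (a * b) := by
    field_simp
  have H := roe_aux γ (a / b) (uL * (a / b)) (a * b) (c / d) (uR * (c / d)) (c * d)
    (La - Lb) (Lc - Ld) (La + Lb) (Lc + Ld)
    (2 * Lb - γ * (2 * La)) (2 * Ld - γ * (2 * Lc)) (c ^ 2 - a ^ 2)
    hγ1 hp hq hz' hbar2 (by ring) (by ring) hrr
  linear_combination H
end

section
/- Let γ > 1 and let (ρ_L, u_L, p_L) and (ρ_R, u_R, p_R) be two states with ρ_L, ρ_R, p_L, p_R > 0. Define for each state z₁ = √(ρ/p), z₂ = u√(ρ/p), z₃ = √(ρp) and the entropy variables v = ((γ − S)/(γ−1) − ρu²/(2p), ρu/p, −ρ/p) with S = log p − γ log ρ. Assume z₁_L ≠ z₁_R and z₃_L ≠ z₃_R, and define Roe's entropy conservative spatial flux f* = (f₁, f₂, f₃) by f₁ = z̄₂ z₃^{ln}, f₂ = (z̄₃ + f₁ z̄₂)/z̄₁, and f₃ = (1/(2z̄₁)) (−f₁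 ((1+γ)/(1−γ)) / z₁^{ln} + f₂ z̄₂). Then ⟨v_R − v_L, f*⟩ = ρ_R u_R − ρ_L u_L, i.e., f* satisfies the entropy conservation condition [v]·f* = [ψ] with spatial flux potential ψ = ρu. -/
open Matrix

lemma roe_aux_s9 (γ a b c d e f A B : ℝ) (hγ : γ - 1 ≠ 0) (hγ' : 1 - γ ≠ 0)
    (hB : B ≠ 0) (hab : a + b ≠ 0) (hba : b - a ≠ 0) :
    (B + ((1 + γ) / (γ - 1)) * A - (d ^ 2 - c ^ 2) / 2) *
        (((c + d) / 2) * ((f - e) / B))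
      + (b * d - a * c) *
        (((e + f) / 2 + (((c + d) / 2) * ((f - e) / B)) * ((c + d) / 2)) / ((a + b) / 2))
      + (-(b ^ 2 - a ^ 2)) *
        ((1 / (2 * ((a + b) / 2))) *
          (-(((c + d) / 2) * ((f - e) / B)) * ((1 + γ) / (1 - γ)) / ((b - a) / A) +
            (((e + f) / 2 + (((c + d) / 2) * ((f - e) / B)) * ((c + d) / 2)) / ((a + b) / 2))
              * ((c + d) / 2)))
      = d * f - c * e := by
  field_simp
  ring

/-- Roe's entropy conservative spatial flux `f* = (f₁, f₂, f₃)` for the 1D Euler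
equations satisfies the entropy conservation condition `[v]·f* = [ψ]` with spatial
flux potential `ψ = ρu`. -/
theorem roe_spatial_flux_is_entropy_conservative (γ ρL uL pL ρR uR pR : ℝ)
    (hγ : 1 < γ) (hρL : 0 < ρL) (hpL : 0 < pL) (hρR : 0 < ρR) (hpR : 0 < pR) :
    let SL : ℝ := Real.log pL - γ * Real.log ρL
    let SR : ℝ := Real.log pR - γ * Real.log ρR
    let vL : Fin 3 → ℝ :=
      ![(γ - SL) / (γ - 1) - ρL * uL ^ 2 / (2 * pL), ρL * uL / pL, -(ρL / pL)]
    let vR : Fin 3 → ℝ :=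
      ![(γ - SR) / (γ - 1) - ρR * uR ^ 2 / (2 * pR), ρR * uR / pR, -(ρR / pR)]
    let z1L : ℝ := Real.sqrt (ρL / pL)
    let z2L : ℝ := uL * Real.sqrt (ρL / pL)
    let z3L : ℝ := Real.sqrt (ρL * pL)
    let z1R : ℝ := Real.sqrt (ρR / pR)
    let z2R : ℝ := uR * Real.sqrt (ρR / pR)
    let z3R : ℝ := Real.sqrt (ρR * pR)
    let z1bar : ℝ := (z1L + z1R) / 2
    let z2bar : ℝ := (z2L + z2R) / 2
    let z3bar : ℝ := (z3L + z3R) / 2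
    let z1ln : ℝ := (z1R - z1L) / (Real.log z1R - Real.log z1L)
    let z3ln : ℝ := (z3R - z3L) / (Real.log z3R - Real.log z3L)
    let f1 : ℝ := z2bar * z3ln
    let f2 : ℝ := (z3bar + f1 * z2bar) / z1bar
    let f3 : ℝ := (1 / (2 * z1bar)) *
      (-f1 * ((1 + γ) / (1 - γ)) / z1ln + f2 * z2bar)
    z1L ≠ z1R → z3L ≠ z3R →
      (vR - vL) ⬝ᵥ ![f1, f2, f3] = ρR * uR - ρL * uL := by
  intro SL SR vL vR z1L z2L z3L z1R z2R z3R z1bar z2bar z3bar z1ln z3ln f1 f2 f3 h1 h3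
  have hz1L : 0 < z1L := Real.sqrt_pos.mpr (by positivity)
  have hz1R : 0 < z1R := Real.sqrt_pos.mpr (by positivity)
  have hz3L : 0 < z3L := Real.sqrt_pos.mpr (by positivity)
  have hz3R : 0 < z3R := Real.sqrt_pos.mpr (by positivity)
  set A : ℝ := Real.log z1R - Real.log z1L with hA
  set B : ℝ := Real.log z3R - Real.log z3L with hB
  have hB0 : B ≠ 0 := by
    intro h
    apply h3
    have h' : Real.log z3R = Real.log z3L := by rw [hB] at h; linarith
    have := congrArg Real.exp h'
    rw [Real.exp_log hz3R, Real.exp_log hz3L] at this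
    exact this.symm
  have hγ1 : γ - 1 ≠ 0 := by linarith
  have hγ2 : 1 - γ ≠ 0 := by linarith
  have hab : z1L + z1R ≠ 0 := by positivity
  have hba : z1R - z1L ≠ 0 := sub_ne_zero.mpr (Ne.symm h1)
  -- squares
  have hq1L : z1L ^ 2 = ρL / pL := Real.sq_sqrt (by positivity)
  have hq1R : z1R ^ 2 = ρR / pR := Real.sq_sqrt (by positivity)
  -- products z1*z3 = ρ
  have h13L : z1L * z3L = ρL := by
    have : z1L * z3L = Real.sqrt ((ρL / pL) * (ρL * pL)) :=
      (Real.sqrt_mul (by positivity) _).symm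
    rw [this]
    have harg : (ρL / pL) * (ρL * pL) = ρL ^ 2 := by field_simp
    rw [harg, Real.sqrt_sq hρL.le]
  have h13R : z1R * z3R = ρR := by
    have : z1R * z3R = Real.sqrt ((ρR / pR) * (ρR * pR)) :=
      (Real.sqrt_mul (by positivity) _).symm
    rw [this]
    have harg : (ρR / pR) * (ρR * pR) = ρR ^ 2 := by field_simp
    rw [harg, Real.sqrt_sq hρR.le]
  have hz2L : z2L = uL * z1L := rfl
  have hz2R : z2R = uR * z1R := rfl
  -- logs
  have hl1L : Real.log z1L = (Real.log ρL - Real.log pL) / 2 := by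
    show Real.log (Real.sqrt (ρL / pL)) = _
    rw [Real.log_sqrt (by positivity), Real.log_div hρL.ne' hpL.ne']
  have hl1R : Real.log z1R = (Real.log ρR - Real.log pR) / 2 := by
    show Real.log (Real.sqrt (ρR / pR)) = _
    rw [Real.log_sqrt (by positivity), Real.log_div hρR.ne' hpR.ne']
  have hl3L : Real.log z3L = (Real.log ρL + Real.log pL) / 2 := by
    show Real.log (Real.sqrt (ρL * pL)) = _
    rw [Real.log_sqrt (by positivity), Real.log_mul hρL.ne' hpL.ne']
  have hl3R : Real.log z3R = (Real.log ρR + Real.log pR) / 2 := by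
    show Real.log (Real.sqrt (ρR * pR)) = _
    rw [Real.log_sqrt (by positivity), Real.log_mul hρR.ne' hpR.ne']
  -- dot product expansion
  have hdot : (vR - vL) ⬝ᵥ ![f1, f2, f3]
      = (vR 0 - vL 0) * f1 + (vR 1 - vL 1) * f2 + (vR 2 - vL 2) * f3 := by
    simp [dotProduct, Fin.sum_univ_three]
  -- component values
  have hv0 : vR 0 - vL 0
      = B + ((1 + γ) / (γ - 1)) * A - (z2R ^ 2 - z2L ^ 2) / 2 := by
    have e0R : vR 0 = (γ - SR) / (γ - 1) - ρR * uR ^ 2 / (2 * pR) := rfl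
    have e0L : vL 0 = (γ - SL) / (γ - 1) - ρL * uL ^ 2 / (2 * pL) := rfl
    have hkR : ρR * uR ^ 2 / (2 * pR) = z2R ^ 2 / 2 := by
      rw [hz2R, mul_pow, hq1R]; field_simp
    have hkL : ρL * uL ^ 2 / (2 * pL) = z2L ^ 2 / 2 := by
      rw [hz2L, mul_pow, hq1L]; field_simp
    rw [e0R, e0L, hkR, hkL, hA, hB, hl1L, hl1R, hl3L, hl3R]
    show (γ - (Real.log pR - γ * Real.log ρR)) / (γ - 1) - z2R ^ 2 / 2 -
        ((γ - (Real.log pL - γ * Real.log ρL)) / (γ - 1) - z2L ^ 2 / 2) = _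
    field_simp
    ring
  have hv1 : vR 1 - vL 1 = z1R * z2R - z1L * z2L := by
    have e1R : vR 1 = ρR * uR / pR := rfl
    have e1L : vL 1 = ρL * uL / pL := rfl
    rw [e1R, e1L, hz2R, hz2L]
    have : z1R * (uR * z1R) = uR * (ρR / pR) := by rw [← hq1R]; ring
    rw [this]
    have : z1L * (uL * z1L) = uL * (ρL / pL) := by rw [← hq1L]; ring
    rw [this]
    ring
  have hv2 : vR 2 - vL 2 = -(z1R ^ 2 - z1L ^ 2) := by
    have e2R : vR 2 = -(ρR / pR) := rfl
    have e2L : vL 2 = -(ρL / pL) := rfl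
    rw [e2R, e2L, ← hq1R, ← hq1L]; ring
  have hrhsR : ρR * uR = z2R * z3R := by rw [hz2R, ← h13R]; ring
  have hrhsL : ρL * uL = z2L * z3L := by rw [hz2L, ← h13L]; ring
  -- flux values
  have hf1 : f1 = ((z2L + z2R) / 2) * ((z3R - z3L) / B) := by rw [hB]
  have hf2 : f2 = ((z3L + z3R) / 2 + f1 * ((z2L + z2R) / 2)) / ((z1L + z1R) / 2) := rfl
  have hf3 : f3 = (1 / (2 * ((z1L + z1R) / 2))) *
      (-f1 * ((1 + γ) / (1 - γ)) / ((z1R - z1L) / A) + f2 * ((z2L + z2R) / 2)) := by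
    rw [hA]
  rw [hdot, hv0, hv1, hv2, hrhsR, hrhsL, hf3, hf2, hf1]
  have key := roe_aux_s9 γ z1L z1R z2L z2R z3L z3R A B hγ1 hγ2 hB0 hab hba
  linarith [key]
end

section
/- Let N ≥ 1 and let u : ℝ^N → ℝ^N be continuously differentiable with derivative H(w) = Du(w) (a continuous linear map ℝ^N → ℝ^N). For v_L, v_R ∈ ℝ^N set Δv = v_R − v_L and v(ξ) = v_L + ξΔv. Then ∫₀¹ u(v(ξ)) dξ = ½(u(v_L) + u(v_R)) − (∫₀¹ (ξ − ½) H(v(ξ)) dξ)(Δv); that is, Tadmor's entropy conservative temporal flux admits the viscosity form with viscosity matrix ∫₀¹ (ξ − ½) H(v(ξ)) dξ. -/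
/-- Viscosity form of Tadmor's entropy conservative temporal flux: for a `C¹` map
`u` with Jacobian `H(w) = Du(w)`, the segment average `∫₀¹ u(v(ξ)) dξ` equals the
arithmetic mean `½(u(v_L) + u(v_R))` minus the matrix `∫₀¹ (ξ − ½) H(v(ξ)) dξ`
applied to the jump `Δv = v_R − v_L`. -/
theorem tadmor_temporal_flux_viscosity_form (N : ℕ) (hN : 1 ≤ N)
    (u : EuclideanSpace ℝ (Fin N) → EuclideanSpace ℝ (Fin N))
    (hu : ContDiff ℝ 1 u)
    (vL vR : EuclideanSpace ℝ (Fin N)) :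
    (∫ ξ in (0:ℝ)..1, u (vL + ξ • (vR - vL))) =
      (2:ℝ)⁻¹ • (u vL + u vR) -
      (∫ ξ in (0:ℝ)..1, (ξ - 2⁻¹) • fderiv ℝ u (vL + ξ • (vR - vL)))
        (vR - vL) := by
  set Δ := vR - vL with hΔ
  set v : ℝ → EuclideanSpace ℝ (Fin N) := fun ξ => vL + ξ • Δ with hvdef
  have hvcont : Continuous v := by fun_prop
  have hvderiv : ∀ ξ : ℝ, HasDerivAt v Δ ξ := by
    intro ξ
    have : HasDerivAt (fun ξ : ℝ => ξ • Δ) ((1:ℝ) • Δ) ξ :=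
      (hasDerivAt_id ξ).smul_const Δ
    exact (by simpa [one_smul] using this : HasDerivAt (fun ξ : ℝ => ξ • Δ) Δ ξ).const_add vL
  have hudiff : ∀ w, HasFDerivAt u (fderiv ℝ u w) w := fun w =>
    (hu.differentiable one_ne_zero w).hasFDerivAt
  have hg : ∀ ξ : ℝ, HasDerivAt (fun ξ => u (v ξ)) (fderiv ℝ u (v ξ) Δ) ξ :=
    fun ξ => (hudiff (v ξ)).comp_hasDerivAt ξ (hvderiv ξ)
  have hgcont : Continuous fun ξ => u (v ξ) := hu.continuous.comp hvcont
  have hHcont : Continuous fun ξ : ℝ => fderiv ℝ u (v ξ) :=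
    (hu.continuous_fderiv one_ne_zero).comp hvcont
  have hHΔcont : Continuous fun ξ : ℝ => (ξ - 2⁻¹) • fderiv ℝ u (v ξ) Δ := by
    fun_prop
  -- integration by parts via FTC for φ ξ = (ξ - 1/2) • u (v ξ)
  have hφ : ∀ ξ ∈ Set.uIcc (0:ℝ) 1,
      HasDerivAt (fun ξ : ℝ => (ξ - 2⁻¹) • u (v ξ))
        (u (v ξ) + (ξ - 2⁻¹) • fderiv ℝ u (v ξ) Δ) ξ := by
    intro ξ _
    have hc : HasDerivAt (fun ξ : ℝ => ξ - 2⁻¹) 1 ξ := by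
      simpa using (hasDerivAt_id ξ).sub_const 2⁻¹
    have h := hc.smul (hg ξ)
    rw [one_smul, add_comm] at h
    exact h
  have hint : IntervalIntegrable
      (fun ξ : ℝ => u (v ξ) + (ξ - 2⁻¹) • fderiv ℝ u (v ξ) Δ)
      MeasureTheory.volume 0 1 := by
    exact (hgcont.add hHΔcont).intervalIntegrable 0 1
  have hFTC := intervalIntegral.integral_eq_sub_of_hasDerivAt hφ hint
  have hsplit :
      (∫ ξ in (0:ℝ)..1, (u (v ξ) + (ξ - 2⁻¹) • fderiv ℝ u (v ξ) Δ)) =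
        (∫ ξ in (0:ℝ)..1, u (v ξ)) +
        ∫ ξ in (0:ℝ)..1, (ξ - 2⁻¹) • fderiv ℝ u (v ξ) Δ :=
    intervalIntegral.integral_add (hgcont.intervalIntegrable 0 1)
      (hHΔcont.intervalIntegrable 0 1)
  have hv0 : v 0 = vL := by simp [hvdef]
  have hv1 : v 1 = vR := by simp [hvdef, hΔ]
  -- evaluate the matrix integral at Δ
  have happly :
      (∫ ξ in (0:ℝ)..1, (ξ - 2⁻¹) • fderiv ℝ u (v ξ)) Δ =
        ∫ ξ in (0:ℝ)..1, (ξ - 2⁻¹) • fderiv ℝ u (v ξ) Δ := by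
    have hIcont : Continuous fun ξ : ℝ => (ξ - 2⁻¹) • fderiv ℝ u (v ξ) := by
      exact (continuous_id.sub continuous_const).smul hHcont
    rw [intervalIntegral.integral_of_le (by norm_num : (0:ℝ) ≤ 1),
        intervalIntegral.integral_of_le (by norm_num : (0:ℝ) ≤ 1)]
    rw [ContinuousLinearMap.integral_apply]
    · simp
    · exact (hIcont.integrableOn_Ioc (μ := MeasureTheory.volume))
  rw [happly]
  have := hFTC
  rw [hsplit, hv0, hv1] at this
  have h2 : ((1:ℝ) - 2⁻¹) = 2⁻¹ := by norm_num
  -- this : ∫ g + ∫ (ξ-½)•g' = 2⁻¹ • u vR - (-2⁻¹) • u vL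
  rw [h2] at this
  have : (∫ ξ in (0:ℝ)..1, u (v ξ)) =
      (2:ℝ)⁻¹ • (u vL + u vR) - ∫ ξ in (0:ℝ)..1, (ξ - 2⁻¹) • fderiv ℝ u (v ξ) Δ := by
    rw [eq_sub_iff_add_eq, this]
    simp [smul_add, neg_smul, sub_eq_add_neg]
    abel
  simpa [hvdef, hΔ] using this
end

section
/- Let N ≥ 1 and let u : ℝ^N → ℝ^N be continuously differentiable such that for every w ∈ ℝ^N the derivative H(w) = Du(w) is symmetric and positive definite (⟨H(w)x, x⟩ > 0 for all x ≠ 0). Then for any v_L, v_R ∈ ℝ^N with v_L ≠ v_R, ⟨v_R − v_L, ∫₀¹ u(v_L + ξ(v_R − v_L)) dξ − u(v_L)⟩ > 0; that is, upwinding in time strictly produces entropy whenever there is a jump in states. -/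
open RealInnerProductSpace

/-- Upwinding in time strictly produces entropy whenever there is a jump in states:
if `u` is `C¹` with symmetric positive definite Jacobian everywhere, then for
`v_L ≠ v_R` the entropy production `⟨Δv, u* − u(v_L)⟩` is strictly positive, where
`u* = ∫₀¹ u(v_L + ξΔv) dξ` is Tadmor's entropy conservative temporal flux. -/
theorem upwind_in_time_produces_entropy (N : ℕ) (hN : 1 ≤ N)
    (u : EuclideanSpace ℝ (Fin N) → EuclideanSpace ℝ (Fin N))
    (hu : ContDiff ℝ 1 u)
    (hsymm : ∀ w x y, ⟪fderiv ℝ u w x, y⟫ = ⟪x, fderiv ℝ u w y⟫)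
    (hpos : ∀ w x, x ≠ 0 → 0 < ⟪fderiv ℝ u w x, x⟫)
    (vL vR : EuclideanSpace ℝ (Fin N)) (hne : vL ≠ vR) :
    0 < ⟪vR - vL, (∫ ξ in (0:ℝ)..1, u (vL + ξ • (vR - vL))) - u vL⟫ := by
  set Δ := vR - vL with hΔdef
  have hΔ : Δ ≠ 0 := sub_ne_zero.mpr (Ne.symm hne)
  set g : ℝ → ℝ := fun s => ⟪Δ, u (vL + s • Δ)⟫ with hgdef
  have hcontpath : Continuous fun s : ℝ => vL + s • Δ := by continuity
  have hgcont : Continuous g := by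
    exact (continuous_const.inner (hu.continuous.comp hcontpath))
  have hg : ∀ s : ℝ, HasDerivAt g ⟪Δ, fderiv ℝ u (vL + s • Δ) Δ⟫ s := by
    intro s
    have h1 : HasDerivAt (fun s : ℝ => vL + s • Δ) Δ s := by
      have := ((hasDerivAt_id s).smul_const Δ).const_add vL
      simpa using this
    have h2 : HasFDerivAt u (fderiv ℝ u (vL + s • Δ)) (vL + s • Δ) :=
      (hu.differentiable one_ne_zero (vL + s • Δ)).hasFDerivAt
    have h3 : HasDerivAt (fun s : ℝ => u (vL + s • Δ))
        (fderiv ℝ u (vL + s • Δ) Δ) s := h2.comp_hasDerivAt s h1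
    have h4 := (hasDerivAt_const s Δ).inner ℝ h3
    simpa using h4
  have hgpos : ∀ s : ℝ, 0 < ⟪Δ, fderiv ℝ u (vL + s • Δ) Δ⟫ := by
    intro s
    rw [real_inner_comm]
    exact hpos _ _ hΔ
  have hmono : StrictMono g := by
    apply strictMono_of_deriv_pos
    intro s
    rw [(hg s).deriv]
    exact hgpos s
  have hInt : IntervalIntegrable (fun ξ => u (vL + ξ • Δ)) MeasureTheory.volume 0 1 :=
    (hu.continuous.comp hcontpath).intervalIntegrable 0 1
  have hswap : ⟪Δ, ∫ ξ in (0:ℝ)..1, u (vL + ξ • Δ)⟫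
      = ∫ ξ in (0:ℝ)..1, g ξ := by
    have := (innerSL ℝ Δ).intervalIntegral_comp_comm hInt
    simpa [hgdef] using this.symm
  have hsub : ⟪Δ, (∫ ξ in (0:ℝ)..1, u (vL + ξ • Δ)) - u vL⟫
      = ∫ ξ in (0:ℝ)..1, (g ξ - g 0) := by
    rw [inner_sub_right, hswap]
    rw [intervalIntegral.integral_sub (hgcont.intervalIntegrable 0 1)
      (intervalIntegrable_const)]
    simp [hgdef]
  rw [hsub]
  apply intervalIntegral.intervalIntegral_pos_of_pos_on
  · exact ((hgcont.sub continuous_const).intervalIntegrable 0 1)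
  · intro x hx
    exact sub_pos.mpr (hmono hx.1)
  · norm_num
end
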